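/- Let (M_n) be a locally square integrable real martingale with M_0 = 0. Then for all x > 0, y > 0, a ≥ 0 and b > 0, P(|M_n|/(a + b⟨M⟩_n) ≥ x and ⟨M⟩_n ≥ [M]_n + y) ≤ 2 exp(−x²(ab + b²y/2)). -/

import Mathlib

open MeasureTheory ProbabilityTheory Real Finset

lemma key_exp_ineq (t : ℝ) : Real.exp (t - t^2/2) ≤ 1 + t + t^2/2 := by
  have h1 : 0 < 1 - t + t^2/2 := by nlinarith [sq_nonneg (t - 1)]
  have h2 : 1 - t + t^2/2 ≤ Real.exp (-(t - t^2/2)) := by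
    have := Real.add_one_le_exp (-(t - t^2/2)); linarith
  have h3 : Real.exp (t - t^2/2) * (1 - t + t^2/2) ≤ 1 := by
    have := mul_le_mul_of_nonneg_left h2 (Real.exp_pos (t - t^2/2)).le
    rwa [← Real.exp_add, add_neg_cancel, Real.exp_zero] at this
  nlinarith [sq_nonneg (t^2), Real.exp_pos (t - t^2/2)]

lemma step_aux
    {Ω : Type*} {m0 : MeasurableSpace Ω} {μ : Measure Ω} [IsProbabilityMeasure μ]
    {ℱ : Filtration ℕ m0} {N : ℕ → Ω → ℝ}
    (hN : Martingale N ℱ μ) (hNsq : ∀ n, MemLp (N n) 2 μ) (l : ℝ) (n : ℕ)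
    {W : Ω → ℝ} {B : ℝ} (hWmeas : StronglyMeasurable[ℱ n] W) (hWpos : ∀ ω, 0 ≤ W ω)
    (hWbdd : ∀ᵐ ω ∂μ, W ω ≤ B) (hWint : Integrable W μ) (hWle : ∫ ω, W ω ∂μ ≤ 1) :
    (∀ᵐ ω ∂μ, W ω * Real.exp (-(l^2/2 * (μ[fun ω' => (N (n+1) ω' - N n ω')^2|ℱ n]) ω)) *
        Real.exp (l * (N (n+1) ω - N n ω) - l^2/2 * (N (n+1) ω - N n ω)^2)
        ≤ B * Real.exp (1/2)) ∧
    Integrable (fun ω => W ω * Real.exp (-(l^2/2 * (μ[fun ω' => (N (n+1) ω' - N n ω')^2|ℱ n]) ω)) *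
        Real.exp (l * (N (n+1) ω - N n ω) - l^2/2 * (N (n+1) ω - N n ω)^2)) μ ∧
    ∫ ω, W ω * Real.exp (-(l^2/2 * (μ[fun ω' => (N (n+1) ω' - N n ω')^2|ℱ n]) ω)) *
        Real.exp (l * (N (n+1) ω - N n ω) - l^2/2 * (N (n+1) ω - N n ω)^2) ∂μ ≤ 1 := by
  set E : Ω → ℝ := μ[fun ω' => (N (n+1) ω' - N n ω')^2|ℱ n] with hE
  have hBnn : 0 ≤ B := by
    rcases hWbdd.exists with ⟨ω, hω⟩
    exact (hWpos ω).trans hω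
  have hd2int : Integrable (fun ω => (N (n+1) ω - N n ω)^2) μ :=
    ((hNsq (n+1)).sub (hNsq n)).integrable_sq
  have hdint : Integrable (fun ω => N (n+1) ω - N n ω) μ :=
    (hN.integrable (n+1)).sub (hN.integrable n)
  have hEnn : 0 ≤ᵐ[μ] E := condExp_nonneg (Filter.Eventually.of_forall fun ω => sq_nonneg _)
  have hEmeas : StronglyMeasurable[ℱ n] E := stronglyMeasurable_condExp
  have hdmeas : StronglyMeasurable (fun ω => N (n+1) ω - N n ω) :=
    ((hN.stronglyAdapted (n+1)).mono (ℱ.le (n+1))).sub ((hN.stronglyAdapted n).mono (ℱ.le n))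
  have hhmeas : StronglyMeasurable[ℱ n] (fun ω => W ω * Real.exp (-(l^2/2 * E ω))) := by
    refine hWmeas.mul (Real.continuous_exp.comp_stronglyMeasurable ?_)
    exact (hEmeas.const_mul (l^2/2)).neg
  have hgmeas : StronglyMeasurable (fun ω =>
      Real.exp (l * (N (n+1) ω - N n ω) - l^2/2 * (N (n+1) ω - N n ω)^2)) := by
    refine Real.continuous_exp.comp_stronglyMeasurable ?_
    exact (hdmeas.const_mul l).sub ((hdmeas.pow 2).const_mul (l^2/2))
  have hgbdd : ∀ ω, Real.exp (l * (N (n+1) ω - N n ω) - l^2/2 * (N (n+1) ω - N n ω)^2)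
      ≤ Real.exp (1/2) := by
    intro ω
    apply Real.exp_le_exp.2
    nlinarith [sq_nonneg (l * (N (n+1) ω - N n ω) - 1)]
  -- a.e. bound
  have habdd : ∀ᵐ ω ∂μ, W ω * Real.exp (-(l^2/2 * E ω)) *
      Real.exp (l * (N (n+1) ω - N n ω) - l^2/2 * (N (n+1) ω - N n ω)^2)
      ≤ B * Real.exp (1/2) := by
    filter_upwards [hWbdd, hEnn] with ω h1 h2
    have he1 : Real.exp (-(l^2/2 * E ω)) ≤ 1 := by
      rw [show (1:ℝ) = Real.exp 0 by rw [Real.exp_zero]]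
      apply Real.exp_le_exp.2
      have : 0 ≤ l^2/2 * E ω := mul_nonneg (by positivity) h2
      linarith
    have hW1 : W ω * Real.exp (-(l^2/2 * E ω)) ≤ B := by
      nlinarith [hWpos ω, (Real.exp_pos (-(l^2/2 * E ω))).le]
    exact mul_le_mul hW1 (hgbdd ω) (Real.exp_pos _).le hBnn
  refine ⟨habdd, ?_, ?_⟩
  · refine Integrable.mono' (integrable_const (B * Real.exp (1/2)))
      (((hhmeas.mono (ℱ.le n)).mul hgmeas).aestronglyMeasurable) ?_
    filter_upwards [habdd] with ω hω
    rw [Real.norm_eq_abs, abs_of_nonneg]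
    · exact hω
    · exact mul_nonneg (mul_nonneg (hWpos ω) (Real.exp_pos _).le) (Real.exp_pos _).le
  · -- the integral bound
    have hwgint : Integrable (fun ω => W ω * Real.exp (-(l^2/2 * E ω)) *
        Real.exp (l * (N (n+1) ω - N n ω) - l^2/2 * (N (n+1) ω - N n ω)^2)) μ := by
      refine Integrable.mono' (integrable_const (B * Real.exp (1/2)))
        (((hhmeas.mono (ℱ.le n)).mul hgmeas).aestronglyMeasurable) ?_
      filter_upwards [habdd] with ω hω
      rw [Real.norm_eq_abs, abs_of_nonneg]
      · exact hω
      · exact mul_nonneg (mul_nonneg (hWpos ω) (Real.exp_pos _).le) (Real.exp_pos _).le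
    have hgint : Integrable (fun ω =>
        Real.exp (l * (N (n+1) ω - N n ω) - l^2/2 * (N (n+1) ω - N n ω)^2)) μ := by
      refine Integrable.mono' (integrable_const (Real.exp (1/2)))
        hgmeas.aestronglyMeasurable (Filter.Eventually.of_forall fun ω => ?_)
      rw [Real.norm_eq_abs, abs_of_nonneg (Real.exp_pos _).le]
      exact hgbdd ω
    -- pull-out property
    have hpull : μ[(fun ω => W ω * Real.exp (-(l^2/2 * E ω))) *
          (fun ω => Real.exp (l * (N (n+1) ω - N n ω) - l^2/2 * (N (n+1) ω - N n ω)^2))|ℱ n]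
        =ᵐ[μ] (fun ω => W ω * Real.exp (-(l^2/2 * E ω))) *
          μ[fun ω => Real.exp (l * (N (n+1) ω - N n ω) - l^2/2 * (N (n+1) ω - N n ω)^2)|ℱ n] :=
      condExp_mul_of_stronglyMeasurable_left hhmeas hwgint hgint
    -- conditional expectation of increment is zero
    have hdcond : μ[fun ω => N (n+1) ω - N n ω|ℱ n] =ᵐ[μ] 0 := by
      have h1 : μ[fun ω => N (n+1) ω - N n ω|ℱ n]
          =ᵐ[μ] μ[N (n+1)|ℱ n] - μ[N n|ℱ n] :=
        condExp_sub (hN.integrable (n+1)) (hN.integrable n) _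
      have h2 := hN.condExp_ae_eq (Nat.le_succ n)
      have h3 := hN.condExp_ae_eq (le_refl n)
      filter_upwards [h1, h2, h3] with ω e1 e2 e3
      simp only [Pi.sub_apply, Pi.zero_apply] at *
      rw [e1, e2, e3]; ring
    -- condexp of d^2
    have hd2cond : μ[fun ω => l^2/2 * (N (n+1) ω - N n ω)^2|ℱ n]
        =ᵐ[μ] fun ω => l^2/2 * E ω := by
      have := condExp_smul (μ := μ) (m := ℱ n) (l^2/2) (fun ω => (N (n+1) ω - N n ω)^2)
      filter_upwards [this] with ω hω
      have e : ((l^2/2) • fun ω => (N (n+1) ω - N n ω)^2) = fun ω => l^2/2 * (N (n+1) ω - N n ω)^2 := rfl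
      rw [e] at hω
      simpa using hω
    have hdcond' : μ[fun ω => l * (N (n+1) ω - N n ω)|ℱ n] =ᵐ[μ] fun _ => 0 := by
      have h1 := condExp_smul (μ := μ) (m := ℱ n) l (fun ω => N (n+1) ω - N n ω)
      filter_upwards [h1, hdcond] with ω e1 e2
      simp only [Pi.smul_apply, smul_eq_mul] at e1
      simp only [Pi.zero_apply] at e2
      have t1 : (μ[fun ω => l * (N (n+1) ω - N n ω)|ℱ n]) ω
          = l * (μ[fun ω => N (n+1) ω - N n ω|ℱ n]) ω := e1
      rw [t1, e2, mul_zero]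
    -- bound on condexp of g
    have hcondle : μ[fun ω => Real.exp (l * (N (n+1) ω - N n ω) - l^2/2 * (N (n+1) ω - N n ω)^2)|ℱ n]
        ≤ᵐ[μ] fun ω => 1 + l^2/2 * E ω := by
      have hgle : ∀ ω, Real.exp (l * (N (n+1) ω - N n ω) - l^2/2 * (N (n+1) ω - N n ω)^2)
          ≤ 1 + l * (N (n+1) ω - N n ω) + l^2/2 * (N (n+1) ω - N n ω)^2 := by
        intro ω
        have h1 := key_exp_ineq (l * (N (n+1) ω - N n ω))
        have e1 : l * (N (n+1) ω - N n ω) - (l * (N (n+1) ω - N n ω))^2/2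
            = l * (N (n+1) ω - N n ω) - l^2/2 * (N (n+1) ω - N n ω)^2 := by ring
        rw [e1] at h1
        refine h1.trans (le_of_eq (by ring))
      have hRint : Integrable (fun ω => 1 + l * (N (n+1) ω - N n ω)
          + l^2/2 * (N (n+1) ω - N n ω)^2) μ :=
        ((integrable_const (1:ℝ)).add (hdint.const_mul l)).add (hd2int.const_mul (l^2/2))
      have h2 := condExp_mono (m := ℱ n) hgint hRint (Filter.Eventually.of_forall hgle)
      have h3 : μ[fun ω => 1 + l * (N (n+1) ω - N n ω) + l^2/2 * (N (n+1) ω - N n ω)^2|ℱ n]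
          =ᵐ[μ] fun ω => 1 + l^2/2 * E ω := by
        have ha1 : μ[(fun ω => 1 + l * (N (n+1) ω - N n ω)) +
            (fun ω => l^2/2 * (N (n+1) ω - N n ω)^2)|ℱ n]
            =ᵐ[μ] μ[fun ω => 1 + l * (N (n+1) ω - N n ω)|ℱ n]
              + μ[fun ω => l^2/2 * (N (n+1) ω - N n ω)^2|ℱ n] :=
          condExp_add ((integrable_const (1:ℝ)).add (hdint.const_mul l)) (hd2int.const_mul (l^2/2)) _
        have ha2 : μ[(fun _ : Ω => (1:ℝ)) + (fun ω => l * (N (n+1) ω - N n ω))|ℱ n]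
            =ᵐ[μ] μ[fun _ : Ω => (1:ℝ)|ℱ n] + μ[fun ω => l * (N (n+1) ω - N n ω)|ℱ n] :=
          condExp_add (integrable_const (1:ℝ)) (hdint.const_mul l) _
        have ha3 := congrFun (condExp_const (μ := μ) (ℱ.le n) (1:ℝ))
        filter_upwards [ha1, ha2, hdcond', hd2cond] with ω e1 e2 e4 e5
        simp only [Pi.add_apply] at e1 e2
        have t1 : (μ[fun ω => 1 + l * (N (n+1) ω - N n ω) + l^2/2 * (N (n+1) ω - N n ω)^2|ℱ n]) ω
            = (μ[fun ω => 1 + l * (N (n+1) ω - N n ω)|ℱ n]) ω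
              + (μ[fun ω => l^2/2 * (N (n+1) ω - N n ω)^2|ℱ n]) ω := e1
        have t2 : (μ[fun ω => 1 + l * (N (n+1) ω - N n ω)|ℱ n]) ω
            = (μ[fun _ : Ω => (1:ℝ)|ℱ n]) ω
              + (μ[fun ω => l * (N (n+1) ω - N n ω)|ℱ n]) ω := e2
        rw [t1, t2, ha3 ω, e4, e5]
        simp
      exact h2.trans h3.le
    have hcondnn : 0 ≤ᵐ[μ]
        μ[fun ω => Real.exp (l * (N (n+1) ω - N n ω) - l^2/2 * (N (n+1) ω - N n ω)^2)|ℱ n] :=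
      condExp_nonneg (Filter.Eventually.of_forall fun ω => (Real.exp_pos _).le)
    have hcondbdd : μ[fun ω => Real.exp (l * (N (n+1) ω - N n ω) - l^2/2 * (N (n+1) ω - N n ω)^2)|ℱ n]
        ≤ᵐ[μ] fun _ => Real.exp (1/2) := by
      have := condExp_mono (m := ℱ n) hgint (integrable_const (Real.exp (1/2)))
        (Filter.Eventually.of_forall hgbdd)
      rwa [condExp_const (ℱ.le n)] at this
    -- integrability of h * condexp g
    have hmint : Integrable (fun ω => W ω * Real.exp (-(l^2/2 * E ω)) *
        (μ[fun ω => Real.exp (l * (N (n+1) ω - N n ω) - l^2/2 * (N (n+1) ω - N n ω)^2)|ℱ n]) ω) μ := by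
      refine Integrable.mono' (integrable_const (B * Real.exp (1/2)))
        (((hhmeas.mono (ℱ.le n)).mul (stronglyMeasurable_condExp.mono (ℱ.le n))).aestronglyMeasurable) ?_
      filter_upwards [hWbdd, hEnn, hcondnn, hcondbdd] with ω h1 h2 h3 h4
      have he1 : Real.exp (-(l^2/2 * E ω)) ≤ 1 := by
        rw [show (1:ℝ) = Real.exp 0 by rw [Real.exp_zero]]
        apply Real.exp_le_exp.2
        have : 0 ≤ l^2/2 * E ω := mul_nonneg (by positivity) h2
        linarith
      rw [Real.norm_eq_abs, abs_of_nonneg (mul_nonneg (mul_nonneg (hWpos ω) (Real.exp_pos _).le) h3)]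
      have hW1 : W ω * Real.exp (-(l^2/2 * E ω)) ≤ B := by
        nlinarith [hWpos ω, (Real.exp_pos (-(l^2/2 * E ω))).le]
      exact mul_le_mul hW1 h4 h3 hBnn
    -- the key a.e. comparison
    have hkey : (fun ω => W ω * Real.exp (-(l^2/2 * E ω)) *
        (μ[fun ω => Real.exp (l * (N (n+1) ω - N n ω) - l^2/2 * (N (n+1) ω - N n ω)^2)|ℱ n]) ω)
        ≤ᵐ[μ] W := by
      filter_upwards [hEnn, hcondle, hcondnn] with ω h2 hc h3
      have hv : 0 ≤ l^2/2 * E ω := mul_nonneg (by positivity) h2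
      have k1 : Real.exp (-(l^2/2 * E ω)) * (1 + l^2/2 * E ω) ≤ 1 := by
        have h4 := Real.add_one_le_exp (l^2/2 * E ω)
        have h5 := mul_le_mul_of_nonneg_left h4 (Real.exp_pos (-(l^2/2 * E ω))).le
        rw [← Real.exp_add, neg_add_cancel, Real.exp_zero] at h5
        linarith [mul_le_mul_of_nonneg_left
          (le_refl (l^2/2 * E ω + 1)) (Real.exp_pos (-(l^2/2 * E ω))).le, h5,
          mul_comm (Real.exp (-(l^2/2 * E ω))) (l^2/2 * E ω + 1)]
      have k2 : W ω * Real.exp (-(l^2/2 * E ω)) *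
          (μ[fun ω => Real.exp (l * (N (n+1) ω - N n ω) - l^2/2 * (N (n+1) ω - N n ω)^2)|ℱ n]) ω
          ≤ W ω * Real.exp (-(l^2/2 * E ω)) * (1 + l^2/2 * E ω) :=
        mul_le_mul_of_nonneg_left hc (mul_nonneg (hWpos ω) (Real.exp_pos _).le)
      have k3 : W ω * Real.exp (-(l^2/2 * E ω)) * (1 + l^2/2 * E ω) ≤ W ω * 1 := by
        rw [mul_assoc]
        exact mul_le_mul_of_nonneg_left k1 (hWpos ω)
      calc W ω * Real.exp (-(l^2/2 * E ω)) *
          (μ[fun ω => Real.exp (l * (N (n+1) ω - N n ω) - l^2/2 * (N (n+1) ω - N n ω)^2)|ℱ n]) ω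
          ≤ W ω * 1 := k2.trans k3
        _ = W ω := mul_one _
    calc ∫ ω, W ω * Real.exp (-(l^2/2 * E ω)) *
          Real.exp (l * (N (n+1) ω - N n ω) - l^2/2 * (N (n+1) ω - N n ω)^2) ∂μ
        = ∫ ω, (μ[(fun ω => W ω * Real.exp (-(l^2/2 * E ω))) *
            (fun ω => Real.exp (l * (N (n+1) ω - N n ω) - l^2/2 * (N (n+1) ω - N n ω)^2))|ℱ n]) ω ∂μ := by
          rw [integral_condExp (ℱ.le n)]
          rfl
      _ = ∫ ω, W ω * Real.exp (-(l^2/2 * E ω)) *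
            (μ[fun ω => Real.exp (l * (N (n+1) ω - N n ω) - l^2/2 * (N (n+1) ω - N n ω)^2)|ℱ n]) ω ∂μ :=
          integral_congr_ae (hpull.trans (Filter.EventuallyEq.refl _ _))
      _ ≤ ∫ ω, W ω ∂μ := integral_mono_ae hmint hWint hkey
      _ ≤ 1 := hWle

lemma superm_aux
    {Ω : Type*} {m0 : MeasurableSpace Ω} {μ : Measure Ω} [IsProbabilityMeasure μ]
    {ℱ : Filtration ℕ m0} {N : ℕ → Ω → ℝ}
    (hN : Martingale N ℱ μ) (hN0 : N 0 = 0) (hNsq : ∀ n, MemLp (N n) 2 μ) (l : ℝ) :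
    ∀ n : ℕ,
      (∀ᵐ ω ∂μ, Real.exp (l * N n ω - l^2/2 *
          ((∑ k ∈ Finset.Icc 1 n, (N k ω - N (k-1) ω)^2) +
           ∑ k ∈ Finset.Icc 1 n, (μ[fun ω' => (N k ω' - N (k-1) ω')^2 | ℱ (k-1)]) ω))
          ≤ Real.exp ((n : ℝ)/2)) ∧
      Integrable (fun ω => Real.exp (l * N n ω - l^2/2 *
          ((∑ k ∈ Finset.Icc 1 n, (N k ω - N (k-1) ω)^2) +
           ∑ k ∈ Finset.Icc 1 n, (μ[fun ω' => (N k ω' - N (k-1) ω')^2 | ℱ (k-1)]) ω))) μ ∧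
      ∫ ω, Real.exp (l * N n ω - l^2/2 *
          ((∑ k ∈ Finset.Icc 1 n, (N k ω - N (k-1) ω)^2) +
           ∑ k ∈ Finset.Icc 1 n, (μ[fun ω' => (N k ω' - N (k-1) ω')^2 | ℱ (k-1)]) ω)) ∂μ ≤ 1 := by
  have hinmeas : ∀ m : ℕ, StronglyMeasurable[ℱ m] (fun ω => l * N m ω - l^2/2 *
      ((∑ k ∈ Finset.Icc 1 m, (N k ω - N (k-1) ω)^2) +
       ∑ k ∈ Finset.Icc 1 m, (μ[fun ω' => (N k ω' - N (k-1) ω')^2 | ℱ (k-1)]) ω)) := by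
    intro m
    have hQ : StronglyMeasurable[ℱ m]
        (fun ω => ∑ k ∈ Finset.Icc 1 m, (N k ω - N (k-1) ω)^2) := by
      apply Finset.stronglyMeasurable_fun_sum
      intro k hk
      have hk' : k ≤ m := (Finset.mem_Icc.1 hk).2
      exact (((hN.stronglyAdapted k).mono (ℱ.mono hk')).sub
        ((hN.stronglyAdapted (k-1)).mono (ℱ.mono ((Nat.sub_le k 1).trans hk')))).pow 2
    have hC : StronglyMeasurable[ℱ m]
        (fun ω => ∑ k ∈ Finset.Icc 1 m, (μ[fun ω' => (N k ω' - N (k-1) ω')^2 | ℱ (k-1)]) ω) := by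
      apply Finset.stronglyMeasurable_fun_sum
      intro k hk
      have hk' : k - 1 ≤ m := (Nat.sub_le k 1).trans (Finset.mem_Icc.1 hk).2
      exact stronglyMeasurable_condExp.mono (ℱ.mono hk')
    exact ((hN.stronglyAdapted m).const_mul l).sub ((hQ.add hC).const_mul (l^2/2))
  intro n
  induction n with
  | zero =>
    have he : Finset.Icc 1 0 = (∅ : Finset ℕ) := by decide
    simp only [he, Finset.sum_empty, add_zero, hN0, Pi.zero_apply, mul_zero, zero_sub,
      Nat.cast_zero, zero_div, Real.exp_zero]
    refine ⟨Filter.Eventually.of_forall fun ω => ?_, ?_, ?_⟩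
    · simp
    · exact (by simp : Integrable (fun _ : Ω => Real.exp (-0)) μ)
    · simp
  | succ n ih =>
    obtain ⟨ihbdd, ihint, ihle⟩ := ih
    have step := step_aux hN hNsq l n
      (W := fun ω => Real.exp (l * N n ω - l^2/2 *
          ((∑ k ∈ Finset.Icc 1 n, (N k ω - N (k-1) ω)^2) +
           ∑ k ∈ Finset.Icc 1 n, (μ[fun ω' => (N k ω' - N (k-1) ω')^2 | ℱ (k-1)]) ω)))
      (B := Real.exp ((n : ℝ)/2))
      (Real.continuous_exp.comp_stronglyMeasurable (hinmeas n))
      (fun ω => (Real.exp_pos _).le) ihbdd ihint ihle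
    obtain ⟨sbdd, sint, sle⟩ := step
    have hfg : ∀ ω, Real.exp (l * N (n+1) ω - l^2/2 *
        ((∑ k ∈ Finset.Icc 1 (n+1), (N k ω - N (k-1) ω)^2) +
         ∑ k ∈ Finset.Icc 1 (n+1), (μ[fun ω' => (N k ω' - N (k-1) ω')^2 | ℱ (k-1)]) ω))
        = Real.exp (l * N n ω - l^2/2 *
            ((∑ k ∈ Finset.Icc 1 n, (N k ω - N (k-1) ω)^2) +
             ∑ k ∈ Finset.Icc 1 n, (μ[fun ω' => (N k ω' - N (k-1) ω')^2 | ℱ (k-1)]) ω)) *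
          Real.exp (-(l^2/2 * (μ[fun ω' => (N (n+1) ω' - N n ω')^2|ℱ n]) ω)) *
          Real.exp (l * (N (n+1) ω - N n ω) - l^2/2 * (N (n+1) ω - N n ω)^2) := by
      intro ω
      rw [Finset.sum_Icc_succ_top (Nat.le_add_left 1 n),
          Finset.sum_Icc_succ_top (Nat.le_add_left 1 n)]
      simp only [Nat.add_sub_cancel]
      rw [← Real.exp_add, ← Real.exp_add]
      congr 1
      ring
    have hbe : Real.exp ((n : ℝ)/2) * Real.exp (1/2) = Real.exp (((n+1 : ℕ) : ℝ)/2) := by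
      rw [← Real.exp_add]; congr 1; push_cast; ring
    refine ⟨?_, ?_, ?_⟩
    · filter_upwards [sbdd] with ω hω
      rw [hfg ω, ← hbe]
      exact hω
    · rw [show (fun ω => Real.exp (l * N (n+1) ω - l^2/2 *
        ((∑ k ∈ Finset.Icc 1 (n+1), (N k ω - N (k-1) ω)^2) +
         ∑ k ∈ Finset.Icc 1 (n+1), (μ[fun ω' => (N k ω' - N (k-1) ω')^2 | ℱ (k-1)]) ω)))
        = fun ω => Real.exp (l * N n ω - l^2/2 *
            ((∑ k ∈ Finset.Icc 1 n, (N k ω - N (k-1) ω)^2) +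
             ∑ k ∈ Finset.Icc 1 n, (μ[fun ω' => (N k ω' - N (k-1) ω')^2 | ℱ (k-1)]) ω)) *
          Real.exp (-(l^2/2 * (μ[fun ω' => (N (n+1) ω' - N n ω')^2|ℱ n]) ω)) *
          Real.exp (l * (N (n+1) ω - N n ω) - l^2/2 * (N (n+1) ω - N n ω)^2)
        from funext hfg]
      exact sint
    · rw [show (fun ω => Real.exp (l * N (n+1) ω - l^2/2 *
        ((∑ k ∈ Finset.Icc 1 (n+1), (N k ω - N (k-1) ω)^2) +
         ∑ k ∈ Finset.Icc 1 (n+1), (μ[fun ω' => (N k ω' - N (k-1) ω')^2 | ℱ (k-1)]) ω)))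
        = fun ω => Real.exp (l * N n ω - l^2/2 *
            ((∑ k ∈ Finset.Icc 1 n, (N k ω - N (k-1) ω)^2) +
             ∑ k ∈ Finset.Icc 1 n, (μ[fun ω' => (N k ω' - N (k-1) ω')^2 | ℱ (k-1)]) ω)) *
          Real.exp (-(l^2/2 * (μ[fun ω' => (N (n+1) ω' - N n ω')^2|ℱ n]) ω)) *
          Real.exp (l * (N (n+1) ω - N n ω) - l^2/2 * (N (n+1) ω - N n ω)^2)
        from funext hfg]
      exact sle

lemma markov_aux
    {Ω : Type*} {m0 : MeasurableSpace Ω} {μ : Measure Ω} [IsProbabilityMeasure μ]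
    {ℱ : Filtration ℕ m0} {N : ℕ → Ω → ℝ}
    (hN : Martingale N ℱ μ) (hN0 : N 0 = 0) (hNsq : ∀ n, MemLp (N n) 2 μ)
    (n : ℕ) (l c : ℝ) :
    μ {ω | Real.exp c ≤ Real.exp (l * N n ω - l^2/2 *
        ((∑ k ∈ Finset.Icc 1 n, (N k ω - N (k-1) ω)^2) +
         ∑ k ∈ Finset.Icc 1 n, (μ[fun ω' => (N k ω' - N (k-1) ω')^2 | ℱ (k-1)]) ω))}
      ≤ ENNReal.ofReal (Real.exp (-c)) := by
  obtain ⟨-, hint, hle⟩ := superm_aux hN hN0 hNsq l n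
  have hnn : 0 ≤ᵐ[μ] (fun ω => Real.exp (l * N n ω - l^2/2 *
        ((∑ k ∈ Finset.Icc 1 n, (N k ω - N (k-1) ω)^2) +
         ∑ k ∈ Finset.Icc 1 n, (μ[fun ω' => (N k ω' - N (k-1) ω')^2 | ℱ (k-1)]) ω))) :=
    Filter.Eventually.of_forall fun ω => (Real.exp_pos _).le
  have hlint : ∫⁻ ω, ENNReal.ofReal (Real.exp (l * N n ω - l^2/2 *
        ((∑ k ∈ Finset.Icc 1 n, (N k ω - N (k-1) ω)^2) +
         ∑ k ∈ Finset.Icc 1 n, (μ[fun ω' => (N k ω' - N (k-1) ω')^2 | ℱ (k-1)]) ω))) ∂μ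
      = ENNReal.ofReal (∫ ω, Real.exp (l * N n ω - l^2/2 *
        ((∑ k ∈ Finset.Icc 1 n, (N k ω - N (k-1) ω)^2) +
         ∑ k ∈ Finset.Icc 1 n, (μ[fun ω' => (N k ω' - N (k-1) ω')^2 | ℱ (k-1)]) ω)) ∂μ) :=
    (ofReal_integral_eq_lintegral_ofReal hint hnn).symm
  have hmark := mul_meas_ge_le_lintegral₀ (μ := μ)
    (f := fun ω => ENNReal.ofReal (Real.exp (l * N n ω - l^2/2 *
        ((∑ k ∈ Finset.Icc 1 n, (N k ω - N (k-1) ω)^2) +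
         ∑ k ∈ Finset.Icc 1 n, (μ[fun ω' => (N k ω' - N (k-1) ω')^2 | ℱ (k-1)]) ω))))
    (hint.aemeasurable.ennreal_ofReal) (ENNReal.ofReal (Real.exp c))
  have hsub : {ω | Real.exp c ≤ Real.exp (l * N n ω - l^2/2 *
        ((∑ k ∈ Finset.Icc 1 n, (N k ω - N (k-1) ω)^2) +
         ∑ k ∈ Finset.Icc 1 n, (μ[fun ω' => (N k ω' - N (k-1) ω')^2 | ℱ (k-1)]) ω))}
      ⊆ {ω | ENNReal.ofReal (Real.exp c) ≤ ENNReal.ofReal (Real.exp (l * N n ω - l^2/2 *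
        ((∑ k ∈ Finset.Icc 1 n, (N k ω - N (k-1) ω)^2) +
         ∑ k ∈ Finset.Icc 1 n, (μ[fun ω' => (N k ω' - N (k-1) ω')^2 | ℱ (k-1)]) ω)))} :=
    fun ω h => ENNReal.ofReal_le_ofReal h
  have hchain : ENNReal.ofReal (Real.exp c) * μ {ω | Real.exp c ≤ Real.exp (l * N n ω - l^2/2 *
        ((∑ k ∈ Finset.Icc 1 n, (N k ω - N (k-1) ω)^2) +
         ∑ k ∈ Finset.Icc 1 n, (μ[fun ω' => (N k ω' - N (k-1) ω')^2 | ℱ (k-1)]) ω))} ≤ 1 := by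
    calc ENNReal.ofReal (Real.exp c) * μ _
        ≤ ENNReal.ofReal (Real.exp c) * μ {ω | ENNReal.ofReal (Real.exp c)
            ≤ ENNReal.ofReal (Real.exp (l * N n ω - l^2/2 *
              ((∑ k ∈ Finset.Icc 1 n, (N k ω - N (k-1) ω)^2) +
               ∑ k ∈ Finset.Icc 1 n, (μ[fun ω' => (N k ω' - N (k-1) ω')^2 | ℱ (k-1)]) ω)))} :=
          mul_le_mul_right (measure_mono hsub) _
      _ ≤ ∫⁻ ω, ENNReal.ofReal (Real.exp (l * N n ω - l^2/2 *
              ((∑ k ∈ Finset.Icc 1 n, (N k ω - N (k-1) ω)^2) +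
               ∑ k ∈ Finset.Icc 1 n, (μ[fun ω' => (N k ω' - N (k-1) ω')^2 | ℱ (k-1)]) ω))) ∂μ :=
          hmark
      _ = ENNReal.ofReal (∫ ω, Real.exp (l * N n ω - l^2/2 *
              ((∑ k ∈ Finset.Icc 1 n, (N k ω - N (k-1) ω)^2) +
               ∑ k ∈ Finset.Icc 1 n, (μ[fun ω' => (N k ω' - N (k-1) ω')^2 | ℱ (k-1)]) ω)) ∂μ) :=
          hlint
      _ ≤ ENNReal.ofReal 1 := ENNReal.ofReal_le_ofReal hle
      _ = 1 := ENNReal.ofReal_one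
  have h2 : μ {ω | Real.exp c ≤ Real.exp (l * N n ω - l^2/2 *
        ((∑ k ∈ Finset.Icc 1 n, (N k ω - N (k-1) ω)^2) +
         ∑ k ∈ Finset.Icc 1 n, (μ[fun ω' => (N k ω' - N (k-1) ω')^2 | ℱ (k-1)]) ω))}
      ≤ (ENNReal.ofReal (Real.exp c))⁻¹ := by
    rw [ENNReal.le_inv_iff_mul_le]
    rw [mul_comm]
    exact hchain
  calc μ _ ≤ (ENNReal.ofReal (Real.exp c))⁻¹ := h2
    _ = ENNReal.ofReal ((Real.exp c)⁻¹) := (ENNReal.ofReal_inv_of_pos (Real.exp_pos c)).symm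
    _ = ENNReal.ofReal (Real.exp (-c)) := by rw [← Real.exp_neg]

/-- Theorem 2.2, inequality (2.4): for a locally square integrable real martingale `M` with
`M 0 = 0`, for all `x, y > 0`, `a ≥ 0`, `b > 0`,
`P(|M n|/(a + b⟨M⟩_n) ≥ x, ⟨M⟩_n ≥ [M]_n + y) ≤ 2 exp(−x²(ab + b²y/2))`. -/
theorem self_normalized_martingale_two_sided_inequality
    {Ω : Type*} {m0 : MeasurableSpace Ω} {μ : Measure Ω} [IsProbabilityMeasure μ]
    {ℱ : Filtration ℕ m0} {M : ℕ → Ω → ℝ}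
    (hM : Martingale M ℱ μ) (hM0 : M 0 = 0) (hMsq : ∀ n, MemLp (M n) 2 μ)
    (n : ℕ) {x y a b : ℝ} (hx : 0 < x) (hy : 0 < y) (ha : 0 ≤ a) (hb : 0 < b) :
    μ {ω | x ≤ |M n ω| /
          (a + b * ∑ k ∈ Finset.Icc 1 n,
            (μ[fun ω' => (M k ω' - M (k - 1) ω') ^ 2 | ℱ (k - 1)]) ω) ∧
        (∑ k ∈ Finset.Icc 1 n, (M k ω - M (k - 1) ω) ^ 2) + y ≤
          ∑ k ∈ Finset.Icc 1 n,
            (μ[fun ω' => (M k ω' - M (k - 1) ω') ^ 2 | ℱ (k - 1)]) ω}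
      ≤ ENNReal.ofReal (2 * Real.exp (-x ^ 2 * (a * b + b ^ 2 * y / 2))) := by
  set c : ℝ := x^2 * (a * b + b^2 * y / 2) with hc
  have hMneg0 : (-M) 0 = 0 := by funext ω; simp [hM0]
  have hA := markov_aux hM hM0 hMsq n (x * b) c
  have hB := markov_aux hM.neg hMneg0 (fun k => (hMsq k).neg) n (x * b) c
  -- rewrite the sums appearing in hB in terms of M
  have hQeq : ∀ ω, (∑ k ∈ Finset.Icc 1 n, ((-M) k ω - (-M) (k-1) ω)^2)
      = ∑ k ∈ Finset.Icc 1 n, (M k ω - M (k-1) ω)^2 := by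
    intro ω
    refine Finset.sum_congr rfl fun k _ => ?_
    show (-(M k ω) - -(M (k-1) ω))^2 = (M k ω - M (k-1) ω)^2
    ring
  have hCeq : ∀ k : ℕ, (μ[fun ω' => ((-M) k ω' - (-M) (k-1) ω')^2 | ℱ (k-1)])
      = (μ[fun ω' => (M k ω' - M (k-1) ω')^2 | ℱ (k-1)]) := by
    intro k
    have hf : (fun ω' => ((-M) k ω' - (-M) (k-1) ω')^2)
        = (fun ω' => (M k ω' - M (k-1) ω')^2) := by
      funext ω'
      show (-(M k ω') - -(M (k-1) ω'))^2 = (M k ω' - M (k-1) ω')^2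
      ring
    rw [hf]
  -- the inclusion
  have hsub : {ω | x ≤ |M n ω| /
          (a + b * ∑ k ∈ Finset.Icc 1 n,
            (μ[fun ω' => (M k ω' - M (k - 1) ω') ^ 2 | ℱ (k - 1)]) ω) ∧
        (∑ k ∈ Finset.Icc 1 n, (M k ω - M (k - 1) ω) ^ 2) + y ≤
          ∑ k ∈ Finset.Icc 1 n,
            (μ[fun ω' => (M k ω' - M (k - 1) ω') ^ 2 | ℱ (k - 1)]) ω}
      ⊆ {ω | Real.exp c ≤ Real.exp ((x*b) * M n ω - (x*b)^2/2 *
            ((∑ k ∈ Finset.Icc 1 n, (M k ω - M (k-1) ω)^2) +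
             ∑ k ∈ Finset.Icc 1 n, (μ[fun ω' => (M k ω' - M (k-1) ω')^2 | ℱ (k-1)]) ω))}
        ∪ {ω | Real.exp c ≤ Real.exp ((x*b) * (-M) n ω - (x*b)^2/2 *
            ((∑ k ∈ Finset.Icc 1 n, ((-M) k ω - (-M) (k-1) ω)^2) +
             ∑ k ∈ Finset.Icc 1 n, (μ[fun ω' => ((-M) k ω' - (-M) (k-1) ω')^2 | ℱ (k-1)]) ω))} := by
    rintro ω ⟨h1, h2⟩
    have hQ : 0 ≤ ∑ k ∈ Finset.Icc 1 n, (M k ω - M (k-1) ω)^2 :=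
      Finset.sum_nonneg fun k _ => sq_nonneg _
    have hC : y ≤ ∑ k ∈ Finset.Icc 1 n,
        (μ[fun ω' => (M k ω' - M (k-1) ω')^2 | ℱ (k-1)]) ω := by linarith
    have hD : 0 < a + b * ∑ k ∈ Finset.Icc 1 n,
        (μ[fun ω' => (M k ω' - M (k-1) ω')^2 | ℱ (k-1)]) ω := by nlinarith
    have habs : x * (a + b * ∑ k ∈ Finset.Icc 1 n,
        (μ[fun ω' => (M k ω' - M (k-1) ω')^2 | ℱ (k-1)]) ω) ≤ |M n ω| :=
      (le_div_iff₀ hD).1 h1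
    have hxb : (0:ℝ) < x * b := mul_pos hx hb
    rcases abs_cases (M n ω) with ⟨heq, -⟩ | ⟨heq, -⟩
    · left
      show Real.exp c ≤ _
      apply Real.exp_le_exp.2
      rw [heq] at habs
      nlinarith [mul_le_mul_of_nonneg_left habs hxb.le,
        mul_le_mul_of_nonneg_left h2 (by positivity : (0:ℝ) ≤ x^2 * b^2 / 2)]
    · right
      show Real.exp c ≤ Real.exp ((x*b) * (-M) n ω - (x*b)^2/2 *
            ((∑ k ∈ Finset.Icc 1 n, ((-M) k ω - (-M) (k-1) ω)^2) +
             ∑ k ∈ Finset.Icc 1 n, (μ[fun ω' => ((-M) k ω' - (-M) (k-1) ω')^2 | ℱ (k-1)]) ω))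
      rw [hQeq ω, show (∑ k ∈ Finset.Icc 1 n,
          (μ[fun ω' => ((-M) k ω' - (-M) (k-1) ω')^2 | ℱ (k-1)]) ω)
          = ∑ k ∈ Finset.Icc 1 n, (μ[fun ω' => (M k ω' - M (k-1) ω')^2 | ℱ (k-1)]) ω from
          Finset.sum_congr rfl fun k _ => by rw [hCeq k]]
      apply Real.exp_le_exp.2
      rw [heq] at habs
      have hMneg : (-M) n ω = -(M n ω) := rfl
      rw [hMneg]
      nlinarith [mul_le_mul_of_nonneg_left habs hxb.le,
        mul_le_mul_of_nonneg_left h2 (by positivity : (0:ℝ) ≤ x^2 * b^2 / 2)]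
  calc μ _ ≤ μ (_ ∪ _) := measure_mono hsub
    _ ≤ _ + _ := measure_union_le _ _
    _ ≤ ENNReal.ofReal (Real.exp (-c)) + ENNReal.ofReal (Real.exp (-c)) := add_le_add hA hB
    _ = ENNReal.ofReal (2 * Real.exp (-x ^ 2 * (a * b + b ^ 2 * y / 2))) := by
        rw [← ENNReal.ofReal_add (Real.exp_pos _).le (Real.exp_pos _).le]
        congr 1
        rw [show -x ^ 2 * (a * b + b ^ 2 * y / 2) = -c from by rw [hc]; ring]
        ring
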